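/- Let d2, d3 be integers with 3 ≤ d2 ≤ d3. If 3 divides d2, or if d3 = 3a + b·d2 for some natural numbers a, b, then there exists a tame automorphism F of ℂ³ with multidegree mdeg F = (3, d2, d3). -/
import Mathlib


open MvPolynomial

/-- The multidegree of a polynomial automorphism of `ℂⁿ`: the sequence of total degrees of the
images of the variables. -/
noncomputable def polyMdeg {n : ℕ} (F : MvPolynomial (Fin n) ℂ ≃ₐ[ℂ] MvPolynomial (Fin n) ℂ) :
    Fin n → ℕ := fun i => (F (X i)).totalDegree

/-- An automorphism is affine (linear) if it maps each variable to a polynomial of degree ≤ 1. -/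
def IsAffineAut {n : ℕ} (F : MvPolynomial (Fin n) ℂ ≃ₐ[ℂ] MvPolynomial (Fin n) ℂ) : Prop :=
  ∀ i, (F (X i)).totalDegree ≤ 1

/-- An automorphism is elementary (triangular) if it sends one variable `xᵢ` to `xᵢ + p`, where
`p` is a polynomial in the other variables, and fixes all other variables. -/
def IsElementaryAut {n : ℕ} (F : MvPolynomial (Fin n) ℂ ≃ₐ[ℂ] MvPolynomial (Fin n) ℂ) : Prop :=
  ∃ (i : Fin n) (p : MvPolynomial (Fin n) ℂ), degreeOf i p = 0 ∧
    F (X i) = X i + p ∧ ∀ j, j ≠ i → F (X j) = X j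

/-- A tame automorphism is a composition of affine and elementary automorphisms, i.e. an element
of the subgroup generated by these. -/
def IsTameAut {n : ℕ} (F : MvPolynomial (Fin n) ℂ ≃ₐ[ℂ] MvPolynomial (Fin n) ℂ) : Prop :=
  F ∈ Subgroup.closure {G : MvPolynomial (Fin n) ℂ ≃ₐ[ℂ] MvPolynomial (Fin n) ℂ |
    IsAffineAut G ∨ IsElementaryAut G}

/-! ### Auxiliary material -/

namespace TameAux

abbrev P3 := MvPolynomial (Fin 3) ℂ

/-- The elementary automorphism sending `X i ↦ X i + X j ^ m * X l ^ n`. -/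
noncomputable def elemAut (i j l : Fin 3) (hj : j ≠ i) (hl : l ≠ i) (m n : ℕ) :
    P3 ≃ₐ[ℂ] P3 :=
  AlgEquiv.ofAlgHom
    (aeval fun t => if t = i then X t + X j ^ m * X l ^ n else X t)
    (aeval fun t => if t = i then X t - X j ^ m * X l ^ n else X t)
    (by
      apply MvPolynomial.algHom_ext
      intro t
      by_cases ht : t = i
      · subst ht
        simp [hj, hl, map_sub, map_mul, map_pow, aeval_X]
      · simp [ht, aeval_X])
    (by
      apply MvPolynomial.algHom_ext
      intro t
      by_cases ht : t = i
      · subst ht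
        simp [hj, hl, map_add, map_mul, map_pow, aeval_X]
      · simp [ht, aeval_X])

lemma elemAut_apply_X (i j l : Fin 3) (hj : j ≠ i) (hl : l ≠ i) (m n : ℕ) (t : Fin 3) :
    elemAut i j l hj hl m n (X t) = if t = i then X t + X j ^ m * X l ^ n else X t := by
  show (aeval fun t => if t = i then X t + X j ^ m * X l ^ n else X t) (X t) = _
  rw [aeval_X]

lemma elemAut_same (i j l : Fin 3) (hj : j ≠ i) (hl : l ≠ i) (m n : ℕ) :
    elemAut i j l hj hl m n (X i) = X i + X j ^ m * X l ^ n := by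
  rw [elemAut_apply_X, if_pos rfl]

lemma elemAut_ne (i j l : Fin 3) (hj : j ≠ i) (hl : l ≠ i) (m n : ℕ) (t : Fin 3)
    (ht : t ≠ i) : elemAut i j l hj hl m n (X t) = X t := by
  rw [elemAut_apply_X, if_neg ht]

lemma degreeOf_pq (i j l : Fin 3) (hj : j ≠ i) (hl : l ≠ i) (m n : ℕ) :
    degreeOf i (X j ^ m * X l ^ n : P3) = 0 := by
  have h1 := degreeOf_mul_le i (X j ^ m : P3) (X l ^ n)
  have h2 := degreeOf_pow_le i (X j : P3) m
  have h3 := degreeOf_pow_le i (X l : P3) n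
  rw [degreeOf_X, if_neg (Ne.symm hj)] at h2
  rw [degreeOf_X, if_neg (Ne.symm hl)] at h3
  omega

lemma elemAut_isElementary (i j l : Fin 3) (hj : j ≠ i) (hl : l ≠ i) (m n : ℕ) :
    IsElementaryAut (elemAut i j l hj hl m n) :=
  ⟨i, X j ^ m * X l ^ n, degreeOf_pq i j l hj hl m n, elemAut_same i j l hj hl m n,
    fun t ht => elemAut_ne i j l hj hl m n t ht⟩

lemma elemAut_isTame (i j l : Fin 3) (hj : j ≠ i) (hl : l ≠ i) (m n : ℕ) :
    IsTameAut (elemAut i j l hj hl m n) :=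
  Subgroup.subset_closure (Or.inr (elemAut_isElementary i j l hj hl m n))

/-! ### Univariate degree helpers -/

lemma monic_X_add_pow {n : ℕ} (hn : 2 ≤ n) :
    (Polynomial.X + Polynomial.X ^ n : Polynomial ℂ).Monic := by
  rw [add_comm]
  exact Polynomial.monic_X_pow_add
    (by rw [Polynomial.degree_X]; exact_mod_cast (by omega : 1 < n))

lemma natDegree_X_add_pow {n : ℕ} (hn : 2 ≤ n) :
    (Polynomial.X + Polynomial.X ^ n : Polynomial ℂ).natDegree = n := by
  have h : (Polynomial.X : Polynomial ℂ).degree < (Polynomial.X ^ n : Polynomial ℂ).degree := by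
    rw [Polynomial.degree_X, Polynomial.degree_X_pow]
    exact_mod_cast (by omega : 1 < n)
  rw [Polynomial.natDegree_eq_of_degree_eq (Polynomial.degree_add_eq_right_of_degree_lt h),
    Polynomial.natDegree_X_pow]

lemma natDegree_add_monic {p M : Polynomial ℂ} (hM : M.Monic) (h : p.natDegree < M.natDegree) :
    (p + M).natDegree = M.natDegree := by
  have hd : p.degree < M.degree := by
    calc p.degree ≤ (p.natDegree : WithBot ℕ) := Polynomial.degree_le_natDegree
    _ < (M.natDegree : WithBot ℕ) := by exact_mod_cast h
    _ = M.degree := (Polynomial.degree_eq_natDegree hM.ne_zero).symm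
  exact Polynomial.natDegree_eq_of_degree_eq (Polynomial.degree_add_eq_right_of_degree_lt hd)

/-- substitution of `X` for every variable -/
noncomputable def uni : P3 →ₐ[ℂ] Polynomial ℂ :=
  aeval fun _ : Fin 3 => (Polynomial.X : Polynomial ℂ)

lemma natDegree_uni_le (p : P3) : (uni p).natDegree ≤ p.totalDegree := by
  rw [uni, aeval_def, eval₂_eq]
  apply Polynomial.natDegree_sum_le_of_forall_le
  intro d _hd
  have h1 : (algebraMap ℂ (Polynomial ℂ)) (coeff d p) * ∏ i ∈ d.support, Polynomial.X ^ d i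
      = Polynomial.C (coeff d p) * Polynomial.X ^ (∑ i ∈ d.support, d i) := by
    rw [Finset.prod_pow_eq_pow_sum]; rfl
  rw [h1]
  refine le_trans (Polynomial.natDegree_C_mul_le _ _) ?_
  rw [Polynomial.natDegree_X_pow]
  simpa [Finsupp.sum] using le_totalDegree _hd

lemma totalDegree_eq_of {p : P3} {n : ℕ} (hup : p.totalDegree ≤ n)
    (him : (uni p).natDegree = n) : p.totalDegree = n :=
  le_antisymm hup (him ▸ natDegree_uni_le p)

lemma rep23 {n : ℕ} (hn : 2 ≤ n) : ∃ α β : ℕ, n = 3 * α + 2 * β := by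
  rcases Nat.even_or_odd n with ⟨m, hm⟩ | ⟨m, hm⟩
  · exact ⟨0, m, by omega⟩
  · exact ⟨1, m - 1, by omega⟩

end TameAux

namespace TameAux

/-! ### The explicit tame automorphisms -/

/-- First half of the construction for the case `3 ∣ d2`. -/
noncomputable def A1 : P3 ≃ₐ[ℂ] P3 :=
  elemAut 1 0 0 (by decide) (by decide) 2 0 *
    elemAut 0 2 2 (by decide) (by decide) 3 0

/-- Second half of the construction for the case `3 ∣ d2`. -/
noncomputable def B1 (k α β : ℕ) : P3 ≃ₐ[ℂ] P3 :=
  elemAut 2 0 1 (by decide) (by decide) α β *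
    elemAut 1 0 0 (by decide) (by decide) k 0

/-- Construction for the case `d2 = 3k`, `d3 = 3α + 2β`. -/
noncomputable def F1 (k α β : ℕ) : P3 ≃ₐ[ℂ] P3 := A1 * B1 k α β

/-- Construction for the case `d3 = 3a + b·d2`. -/
noncomputable def F2 (d2 a b : ℕ) : P3 ≃ₐ[ℂ] P3 :=
  elemAut 0 1 1 (by decide) (by decide) 3 0 *
    elemAut 1 2 2 (by decide) (by decide) d2 0 *
    elemAut 2 0 1 (by decide) (by decide) a b

lemma F1_tame (k α β : ℕ) : IsTameAut (F1 k α β) :=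
  mul_mem (mul_mem (elemAut_isTame _ _ _ _ _ _ _) (elemAut_isTame _ _ _ _ _ _ _))
    (mul_mem (elemAut_isTame _ _ _ _ _ _ _) (elemAut_isTame _ _ _ _ _ _ _))

lemma F2_tame (d2 a b : ℕ) : IsTameAut (F2 d2 a b) :=
  mul_mem (mul_mem (elemAut_isTame _ _ _ _ _ _ _)
    (elemAut_isTame _ _ _ _ _ _ _)) (elemAut_isTame _ _ _ _ _ _ _)

lemma A1_x0 : A1 (X 0) = X 0 + X 2 ^ 3 := by
  simp [A1, AlgEquiv.aut_mul, AlgEquiv.trans_apply, elemAut_apply_X,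
    map_add, map_mul, map_pow]

lemma A1_x1 : A1 (X 1) = X 1 + X 0 ^ 2 := by
  simp [A1, AlgEquiv.aut_mul, AlgEquiv.trans_apply, elemAut_apply_X,
    map_add, map_mul, map_pow]

lemma A1_x2 : A1 (X 2) = X 2 := by
  simp [A1, AlgEquiv.aut_mul, AlgEquiv.trans_apply, elemAut_apply_X]

lemma B1_x0 (k α β : ℕ) : B1 k α β (X 0) = X 0 := by
  simp [B1, AlgEquiv.aut_mul, AlgEquiv.trans_apply, elemAut_apply_X]

lemma B1_x1 (k α β : ℕ) : B1 k α β (X 1) = X 1 + X 0 ^ k := by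
  simp [B1, AlgEquiv.aut_mul, AlgEquiv.trans_apply, elemAut_apply_X,
    map_add, map_mul, map_pow]

lemma B1_x2 (k α β : ℕ) : B1 k α β (X 2) = X 2 + X 0 ^ α * X 1 ^ β := by
  simp [B1, AlgEquiv.aut_mul, AlgEquiv.trans_apply, elemAut_apply_X,
    map_add, map_mul, map_pow]

lemma F1_apply (k α β : ℕ) (p : P3) : F1 k α β p = A1 (B1 k α β p) := by
  rw [F1, AlgEquiv.aut_mul, AlgEquiv.trans_apply]

lemma F1_e0 (k α β : ℕ) : F1 k α β (X 0) = X 0 + X 2 ^ 3 := by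
  rw [F1_apply, B1_x0, A1_x0]

lemma F1_e1 (k α β : ℕ) : F1 k α β (X 1) = X 1 + X 0 ^ 2 + (X 0 + X 2 ^ 3) ^ k := by
  rw [F1_apply, B1_x1, map_add, map_pow, A1_x1, A1_x0]

lemma F1_e2 (k α β : ℕ) :
    F1 k α β (X 2) = X 2 + (X 0 + X 2 ^ 3) ^ α * (X 1 + X 0 ^ 2) ^ β := by
  rw [F1_apply, B1_x2, map_add, map_mul, map_pow, map_pow, A1_x2, A1_x0, A1_x1]

lemma F2_e0 (d2 a b : ℕ) : F2 d2 a b (X 0) = X 0 + X 1 ^ 3 := by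
  simp [F2, AlgEquiv.aut_mul, AlgEquiv.trans_apply, elemAut_apply_X,
    map_add, map_mul, map_pow]

lemma F2_e1 (d2 a b : ℕ) : F2 d2 a b (X 1) = X 1 + X 2 ^ d2 := by
  simp [F2, AlgEquiv.aut_mul, AlgEquiv.trans_apply, elemAut_apply_X,
    map_add, map_mul, map_pow]

lemma F2_e2 (d2 a b : ℕ) :
    F2 d2 a b (X 2) = X 2 + (X 0 + X 1 ^ 3) ^ a * (X 1 + X 2 ^ d2) ^ b := by
  simp [F2, AlgEquiv.aut_mul, AlgEquiv.trans_apply, elemAut_apply_X,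
    map_add, map_mul, map_pow]

/-! ### Degree computations -/

lemma tdle_X_add_pow {i j : Fin 3} {n : ℕ} (hn : 1 ≤ n) :
    (X i + X j ^ n : P3).totalDegree ≤ n := by
  refine le_trans (totalDegree_add _ _) ?_
  simp only [totalDegree_X, totalDegree_X_pow]
  omega

lemma td_X_add_pow {i j : Fin 3} {n : ℕ} (hn : 2 ≤ n) :
    (X i + X j ^ n : P3).totalDegree = n := by
  refine totalDegree_eq_of (tdle_X_add_pow (by omega)) ?_
  have him : uni (X i + X j ^ n : P3) = Polynomial.X + Polynomial.X ^ n := by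
    simp [uni, map_add, map_pow, aeval_X]
  rw [him, natDegree_X_add_pow hn]

lemma F1_d0 (k α β : ℕ) : (F1 k α β (X 0)).totalDegree = 3 := by
  rw [F1_e0]
  exact td_X_add_pow (by norm_num)

lemma F1_d1 (k α β : ℕ) (hk : 1 ≤ k) : (F1 k α β (X 1)).totalDegree = 3 * k := by
  rw [F1_e1]
  refine totalDegree_eq_of ?_ ?_
  · refine le_trans (totalDegree_add _ _) (max_le (le_trans (totalDegree_add _ _)
      (max_le ?_ ?_)) ?_)
    · rw [totalDegree_X]; omega
    · rw [totalDegree_X_pow]; omega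
    · refine le_trans (totalDegree_pow _ _) ?_
      have := Nat.mul_le_mul_left k (tdle_X_add_pow (i := (0 : Fin 3)) (j := 2)
        (n := 3) (by omega))
      omega
  · have him : uni (X 1 + X 0 ^ 2 + (X 0 + X 2 ^ 3) ^ k : P3)
        = Polynomial.X + Polynomial.X ^ 2 + (Polynomial.X + Polynomial.X ^ 3) ^ k := by
      simp [uni, map_add, map_pow, aeval_X]
    have hm : ((Polynomial.X + Polynomial.X ^ 3 : Polynomial ℂ) ^ k).Monic :=
      (monic_X_add_pow (by norm_num)).pow k
    have hnd : ((Polynomial.X + Polynomial.X ^ 3 : Polynomial ℂ) ^ k).natDegree = k * 3 := by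
      rw [(monic_X_add_pow (by norm_num)).natDegree_pow, natDegree_X_add_pow (by norm_num)]
    rw [him, natDegree_add_monic hm (by rw [natDegree_X_add_pow (by norm_num), hnd]; omega),
      hnd]
    omega

lemma F1_d2 (k α β : ℕ) (hd : 3 ≤ 3 * α + 2 * β) :
    (F1 k α β (X 2)).totalDegree = 3 * α + 2 * β := by
  rw [F1_e2]
  refine totalDegree_eq_of ?_ ?_
  · refine le_trans (totalDegree_add _ _) (max_le ?_ ?_)
    · rw [totalDegree_X]; omega
    · refine le_trans (totalDegree_mul _ _) ?_
      have hA : ((X 0 + X 2 ^ 3 : P3) ^ α).totalDegree ≤ α * 3 :=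
        le_trans (totalDegree_pow _ _) (Nat.mul_le_mul_left α (tdle_X_add_pow (by omega)))
      have hB : ((X 1 + X 0 ^ 2 : P3) ^ β).totalDegree ≤ β * 2 :=
        le_trans (totalDegree_pow _ _) (Nat.mul_le_mul_left β (tdle_X_add_pow (by omega)))
      omega
  · have him : uni (X 2 + (X 0 + X 2 ^ 3) ^ α * (X 1 + X 0 ^ 2) ^ β : P3)
        = Polynomial.X + (Polynomial.X + Polynomial.X ^ 3) ^ α *
          (Polynomial.X + Polynomial.X ^ 2) ^ β := by
      simp [uni, map_add, map_mul, map_pow, aeval_X]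
    have hm : ((Polynomial.X + Polynomial.X ^ 3 : Polynomial ℂ) ^ α *
        (Polynomial.X + Polynomial.X ^ 2 : Polynomial ℂ) ^ β).Monic :=
      ((monic_X_add_pow (by norm_num)).pow α).mul ((monic_X_add_pow (by norm_num)).pow β)
    have hnd : ((Polynomial.X + Polynomial.X ^ 3 : Polynomial ℂ) ^ α *
        (Polynomial.X + Polynomial.X ^ 2 : Polynomial ℂ) ^ β).natDegree = α * 3 + β * 2 := by
      rw [((monic_X_add_pow (by norm_num)).pow α).natDegree_mul
          ((monic_X_add_pow (by norm_num)).pow β),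
        (monic_X_add_pow (by norm_num)).natDegree_pow,
        (monic_X_add_pow (by norm_num)).natDegree_pow,
        natDegree_X_add_pow (by norm_num), natDegree_X_add_pow (by norm_num)]
    rw [him, natDegree_add_monic hm (by rw [Polynomial.natDegree_X, hnd]; omega), hnd]
    omega

lemma F2_d0 (d2 a b : ℕ) : (F2 d2 a b (X 0)).totalDegree = 3 := by
  rw [F2_e0]
  exact td_X_add_pow (by norm_num)

lemma F2_d1 (d2 a b : ℕ) (h2 : 2 ≤ d2) : (F2 d2 a b (X 1)).totalDegree = d2 := by
  rw [F2_e1]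
  exact td_X_add_pow h2

lemma F2_d2 (d2 a b : ℕ) (h2 : 2 ≤ d2) (hd : 3 ≤ 3 * a + b * d2) :
    (F2 d2 a b (X 2)).totalDegree = 3 * a + b * d2 := by
  rw [F2_e2]
  refine totalDegree_eq_of ?_ ?_
  · refine le_trans (totalDegree_add _ _) (max_le ?_ ?_)
    · rw [totalDegree_X]; omega
    · refine le_trans (totalDegree_mul _ _) ?_
      have hA : ((X 0 + X 1 ^ 3 : P3) ^ a).totalDegree ≤ a * 3 :=
        le_trans (totalDegree_pow _ _) (Nat.mul_le_mul_left a (tdle_X_add_pow (by omega)))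
      have hB : ((X 1 + X 2 ^ d2 : P3) ^ b).totalDegree ≤ b * d2 :=
        le_trans (totalDegree_pow _ _) (Nat.mul_le_mul_left b (tdle_X_add_pow (by omega)))
      omega
  · have him : uni (X 2 + (X 0 + X 1 ^ 3) ^ a * (X 1 + X 2 ^ d2) ^ b : P3)
        = Polynomial.X + (Polynomial.X + Polynomial.X ^ 3) ^ a *
          (Polynomial.X + Polynomial.X ^ d2) ^ b := by
      simp [uni, map_add, map_mul, map_pow, aeval_X]
    have hm : ((Polynomial.X + Polynomial.X ^ 3 : Polynomial ℂ) ^ a *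
        (Polynomial.X + Polynomial.X ^ d2 : Polynomial ℂ) ^ b).Monic :=
      ((monic_X_add_pow (by norm_num)).pow a).mul ((monic_X_add_pow h2).pow b)
    have hnd : ((Polynomial.X + Polynomial.X ^ 3 : Polynomial ℂ) ^ a *
        (Polynomial.X + Polynomial.X ^ d2 : Polynomial ℂ) ^ b).natDegree
          = a * 3 + b * d2 := by
      rw [((monic_X_add_pow (by norm_num)).pow a).natDegree_mul
          ((monic_X_add_pow h2).pow b),
        (monic_X_add_pow (by norm_num)).natDegree_pow,
        (monic_X_add_pow h2).natDegree_pow,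
        natDegree_X_add_pow (by norm_num), natDegree_X_add_pow h2]
    rw [him, natDegree_add_monic hm (by rw [Polynomial.natDegree_X, hnd]; omega), hnd]
    omega

end TameAux

open TameAux

/-- If `3 ≤ d2 ≤ d3` and `3 ∣ d2` or `d3 = 3a + b·d2` for some naturals `a, b`, then there is a
tame automorphism of `ℂ³` with multidegree `(3, d2, d3)`. -/
theorem exists_tame_of_dvd_or_mem (d2 d3 : ℕ) (h2 : 3 ≤ d2) (h23 : d2 ≤ d3)
    (h : 3 ∣ d2 ∨ ∃ a b : ℕ, d3 = 3 * a + b * d2) :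
    ∃ F : MvPolynomial (Fin 3) ℂ ≃ₐ[ℂ] MvPolynomial (Fin 3) ℂ,
      IsTameAut F ∧ polyMdeg F = ![3, d2, d3] := by
  have hd3 : 3 ≤ d3 := le_trans h2 h23
  rcases h with hdvd | ⟨a, b, hab⟩
  · obtain ⟨k, hk⟩ := hdvd
    obtain ⟨α, β, hαβ⟩ := rep23 (by omega : 2 ≤ d3)
    refine ⟨F1 k α β, F1_tame k α β, ?_⟩
    funext i
    fin_cases i
    · simpa [polyMdeg] using F1_d0 k α β
    · simpa [polyMdeg, hk] using F1_d1 k α β (by omega)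
    · simpa [polyMdeg, hαβ] using F1_d2 k α β (by omega)
  · refine ⟨F2 d2 a b, F2_tame d2 a b, ?_⟩
    funext i
    fin_cases i
    · simpa [polyMdeg] using F2_d0 d2 a b
    · simpa [polyMdeg] using F2_d1 d2 a b (by omega)
    · simpa [polyMdeg, hab] using F2_d2 d2 a b (by omega) (by omega)
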